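/- Let x : ℕ → ℝ be a sequence of positive real numbers satisfying the Somos-5 recurrence x_n · x_{n+5} = x_{n+1} · x_{n+4} + x_{n+2} · x_{n+3} for all n ≥ 1, and define F_j(n) := (x_{n+j−1} · x_{n+j+1})/x_{n+j}² for j = 1, 2, 3. Then both quantities H_1(n) := F_1F_2F_3 + 1/F_1 + 1/F_2 + 1/F_3 + 1/(F_1F_2F_3) and H_2(n) := F_1F_2 + F_2F_3 + 1/(F_1F_2) + 1/(F_2F_3) + 1/(F_1F_2²F_3) (with F_j = F_j(n)) are independent of n, i.e. they are first integrals of the Somos-5 map. -/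

import Mathlib

lemma somos5_aux1 (a b c d e f : ℝ) (ha : a ≠ 0) (hb : b ≠ 0) (hc : c ≠ 0)
    (hd : d ≠ 0) (he : e ≠ 0) (hf : f ≠ 0) (h : a * f = b * e + c * d) :
    (b * d / c ^ 2) * (c * e / d ^ 2) * (d * f / e ^ 2) + 1 / (b * d / c ^ 2)
      + 1 / (c * e / d ^ 2) + 1 / (d * f / e ^ 2)
      + 1 / ((b * d / c ^ 2) * (c * e / d ^ 2) * (d * f / e ^ 2))
    = (a * c / b ^ 2) * (b * d / c ^ 2) * (c * e / d ^ 2) + 1 / (a * c / b ^ 2)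
      + 1 / (b * d / c ^ 2) + 1 / (c * e / d ^ 2)
      + 1 / ((a * c / b ^ 2) * (b * d / c ^ 2) * (c * e / d ^ 2)) := by
  have hf' : f = (b * e + c * d) / a := by
    rw [eq_div_iff ha, mul_comm]; exact h
  subst hf'
  have hbe : b * e + c * d ≠ 0 := by
    intro h0; apply hf; rw [h0, zero_div]
  have hs : (b * e + c * d)⁻¹ * (b * e + c * d) = 1 := inv_mul_cancel₀ hbe
  field_simp
  linear_combination (e ^ 2 * c * a ^ 2) * hs

lemma somos5_aux2 (a b c d e f : ℝ) (ha : a ≠ 0) (hb : b ≠ 0) (hc : c ≠ 0)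
    (hd : d ≠ 0) (he : e ≠ 0) (hf : f ≠ 0) (h : a * f = b * e + c * d) :
    (b * d / c ^ 2) * (c * e / d ^ 2) + (c * e / d ^ 2) * (d * f / e ^ 2)
      + 1 / ((b * d / c ^ 2) * (c * e / d ^ 2))
      + 1 / ((c * e / d ^ 2) * (d * f / e ^ 2))
      + 1 / ((b * d / c ^ 2) * (c * e / d ^ 2) ^ 2 * (d * f / e ^ 2))
    = (a * c / b ^ 2) * (b * d / c ^ 2) + (b * d / c ^ 2) * (c * e / d ^ 2)
      + 1 / ((a * c / b ^ 2) * (b * d / c ^ 2))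
      + 1 / ((b * d / c ^ 2) * (c * e / d ^ 2))
      + 1 / ((a * c / b ^ 2) * (b * d / c ^ 2) ^ 2 * (c * e / d ^ 2)) := by
  have hf' : f = (b * e + c * d) / a := by
    rw [eq_div_iff ha, mul_comm]; exact h
  subst hf'
  have hbe : b * e + c * d ≠ 0 := by
    intro h0; apply hf; rw [h0, zero_div]
  have hs : (b * e + c * d)⁻¹ * (b * e + c * d) = 1 := inv_mul_cancel₀ hbe
  field_simp
  linear_combination (d ^ 2 * e * a ^ 2) * hs

/-- For the Somos-5 recurrence `x n * x (n+5) = x (n+1) * x (n+4) + x (n+2) * x (n+3)`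
on positive reals, with `F j n = x (n+j-1) * x (n+j+1) / x (n+j)^2` for `j = 1, 2, 3`,
the quantities
`H₁ = F₁F₂F₃ + 1/F₁ + 1/F₂ + 1/F₃ + 1/(F₁F₂F₃)` and
`H₂ = F₁F₂ + F₂F₃ + 1/(F₁F₂) + 1/(F₂F₃) + 1/(F₁F₂²F₃)`
are first integrals: both are independent of `n`. -/
theorem stmt_16 (x : ℕ → ℝ) (hpos : ∀ n, 0 < x n)
    (hrec : ∀ n, 1 ≤ n → x n * x (n + 5) = x (n + 1) * x (n + 4) + x (n + 2) * x (n + 3))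
    (F : ℕ → ℕ → ℝ)
    (hF : ∀ j n, F j n = x (n + j - 1) * x (n + j + 1) / x (n + j) ^ 2)
    (H₁ H₂ : ℕ → ℝ)
    (hH₁ : ∀ n, H₁ n = F 1 n * F 2 n * F 3 n + 1 / F 1 n + 1 / F 2 n + 1 / F 3 n
      + 1 / (F 1 n * F 2 n * F 3 n))
    (hH₂ : ∀ n, H₂ n = F 1 n * F 2 n + F 2 n * F 3 n + 1 / (F 1 n * F 2 n)
      + 1 / (F 2 n * F 3 n) + 1 / (F 1 n * F 2 n ^ 2 * F 3 n)) :
    (∀ n, 1 ≤ n → H₁ (n + 1) = H₁ n) ∧ (∀ n, 1 ≤ n → H₂ (n + 1) = H₂ n) := by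
  have hx : ∀ m, x m ≠ 0 := fun m => (hpos m).ne'
  have key : ∀ n, (F 1 n = x n * x (n + 2) / x (n + 1) ^ 2)
      ∧ (F 2 n = x (n + 1) * x (n + 3) / x (n + 2) ^ 2)
      ∧ (F 3 n = x (n + 2) * x (n + 4) / x (n + 3) ^ 2) := by
    intro n
    refine ⟨?_, ?_, ?_⟩ <;> rw [hF] <;> norm_num
  constructor <;> intro n hn
  · rw [hH₁, hH₁, (key n).1, (key n).2.1, (key n).2.2,
      (key (n+1)).1, (key (n+1)).2.1, (key (n+1)).2.2,
      show n + 1 + 1 = n + 2 by ring, show n + 1 + 2 = n + 3 by ring,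
      show n + 1 + 3 = n + 4 by ring, show n + 1 + 4 = n + 5 by ring]
    exact somos5_aux1 _ _ _ _ _ _ (hx n) (hx (n+1)) (hx (n+2)) (hx (n+3))
      (hx (n+4)) (hx (n+5)) (hrec n hn)
  · rw [hH₂, hH₂, (key n).1, (key n).2.1, (key n).2.2,
      (key (n+1)).1, (key (n+1)).2.1, (key (n+1)).2.2,
      show n + 1 + 1 = n + 2 by ring, show n + 1 + 2 = n + 3 by ring,
      show n + 1 + 3 = n + 4 by ring, show n + 1 + 4 = n + 5 by ring]
    exact somos5_aux2 _ _ _ _ _ _ (hx n) (hx (n+1)) (hx (n+2)) (hx (n+3))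
      (hx (n+4)) (hx (n+5)) (hrec n hn)
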